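/- arXiv:0902.1923 — 4 statements merged into one kernel-verified Lean document; each statement's English description precedes it below -/
import Mathlib

section
/- Let 𝓗 be an infinite-dimensional separable real Hilbert space, let H and G be bounded self-adjoint operators on 𝓗, and let (u_i)_{i≥1} be a Hilbert (complete orthonormal) basis of 𝓗 consisting of eigenvectors of H, H u_i = λ_i u_i, where the sequence of eigenvalues (λ_i)_{i≥1} is nondecreasing. Then for every integer k ≥ 1, ∑_{i=1}^k (λ_{k+1} − λ_i)² ⟨[H,G]u_i, G u_i⟩ ≤ ∑_{i=1}^k (λ_{k+1} − λ_i) ‖[H,G]u_i‖², where [H,G] := HG − GH denotes the commutator, ⟨·,·⟩ the inner product of 𝓗 and ‖·‖ its norm. -/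
open scoped RealInnerProductSpace

/-- Abstract commutator–gap lemma (Lemma 2.1): for bounded self-adjoint operators `A` and `G`
on an infinite-dimensional separable real Hilbert space `𝓗`, and a complete orthonormal
family `(u i)_{i ≥ 1}` of eigenvectors of `A` with nondecreasing eigenvalues `lam i`,
one has the Harrell–Stubbe/Ashbaugh–Hermi inequality. -/
theorem commutator_gap_lemma
    {𝓗 : Type*} [NormedAddCommGroup 𝓗] [InnerProductSpace ℝ 𝓗] [CompleteSpace 𝓗]
    [TopologicalSpace.SeparableSpace 𝓗]
    (hinf : ¬ FiniteDimensional ℝ 𝓗)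
    (A G : 𝓗 →L[ℝ] 𝓗) (hA : IsSelfAdjoint A) (hG : IsSelfAdjoint G)
    (u : ℕ → 𝓗) (lam : ℕ → ℝ)
    (h_orth : Orthonormal ℝ (fun i : {i : ℕ // 1 ≤ i} => u i))
    (h_complete : (Submodule.span ℝ (u '' {i : ℕ | 1 ≤ i})).topologicalClosure = ⊤)
    (h_eig : ∀ i : ℕ, 1 ≤ i → A (u i) = lam i • u i)
    (h_mono : ∀ i j : ℕ, 1 ≤ i → i ≤ j → lam i ≤ lam j)
    (k : ℕ) (hk : 1 ≤ k) :
    ∑ i ∈ Finset.Icc 1 k,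
        (lam (k+1) - lam i)^2 * ⟪(A * G - G * A) (u i), G (u i)⟫
      ≤ ∑ i ∈ Finset.Icc 1 k,
        (lam (k+1) - lam i) * ‖(A * G - G * A) (u i)‖^2 := by
  classical
  -- symmetry of A and G
  have hAsym : ∀ x y : 𝓗, ⟪A x, y⟫ = ⟪x, A y⟫ := by
    intro x y
    have hsym := hA.isSymmetric x y
    simpa only [ContinuousLinearMap.coe_coe] using hsym
  have hGsym : ∀ x y : 𝓗, ⟪G x, y⟫ = ⟪x, G y⟫ := by
    intro x y
    have hsym := hG.isSymmetric x y
    simpa only [ContinuousLinearMap.coe_coe] using hsym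
  -- orthonormality in ite form
  have horth : ∀ i j : ℕ, 1 ≤ i → 1 ≤ j → ⟪u i, u j⟫ = if i = j then 1 else 0 := by
    intro i j hi hj
    have h := (orthonormal_iff_ite.mp h_orth) ⟨i, hi⟩ ⟨j, hj⟩
    simpa [Subtype.ext_iff] using h
  -- spectral lower bound on the orthogonal complement of u_1, ..., u_k
  have hspec : ∀ x : 𝓗, (∀ j : ℕ, 1 ≤ j → j ≤ k → ⟪x, u j⟫ = 0) →
      lam (k+1) * ‖x‖^2 ≤ ⟪A x, x⟫ := by
    have hsp : ⊤ ≤ (Submodule.span ℝ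
        (Set.range fun i : {i : ℕ // 1 ≤ i} => u ↑i)).topologicalClosure := by
      rw [show (Set.range fun i : {i : ℕ // 1 ≤ i} => u ↑i) = u '' {i : ℕ | 1 ≤ i} from
        (Set.image_eq_range u {i : ℕ | 1 ≤ i}).symm, h_complete]
    let b : HilbertBasis {i : ℕ // 1 ≤ i} ℝ 𝓗 := HilbertBasis.mk h_orth hsp
    have hb : ∀ i : {i : ℕ // 1 ≤ i}, b i = u i := fun i => by
      rw [show ⇑b = fun i : {i : ℕ // 1 ≤ i} => u ↑i from HilbertBasis.coe_mk h_orth hsp]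
    intro x hx
    have h1 : HasSum (fun i : {i : ℕ // 1 ≤ i} => ⟪A x, b i⟫ * ⟪b i, x⟫) ⟪A x, x⟫ :=
      b.hasSum_inner_mul_inner _ _
    have h2 : HasSum (fun i : {i : ℕ // 1 ≤ i} => ⟪x, b i⟫ * ⟪b i, x⟫) ⟪x, x⟫ :=
      b.hasSum_inner_mul_inner _ _
    have hterm : ∀ i : {i : ℕ // 1 ≤ i},
        ⟪A x, b i⟫ * ⟪b i, x⟫ = lam ↑i * (⟪x, u ↑i⟫ * ⟪x, u ↑i⟫) := by
      intro i
      rw [hb i]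
      have h3 : ⟪A x, u ↑i⟫ = lam ↑i * ⟪x, u ↑i⟫ := by
        rw [hAsym x (u ↑i), h_eig ↑i i.2, real_inner_smul_right]
      rw [h3, real_inner_comm (u ↑i) x]; ring
    have hterm2 : ∀ i : {i : ℕ // 1 ≤ i},
        ⟪x, b i⟫ * ⟪b i, x⟫ = ⟪x, u ↑i⟫ * ⟪x, u ↑i⟫ := by
      intro i; rw [hb i, real_inner_comm (u ↑i) x]
    simp only [hterm] at h1
    simp only [hterm2] at h2
    have h4 := h1.sub (h2.mul_left (lam (k+1)))
    have h5 : 0 ≤ ⟪A x, x⟫ - lam (k+1) * ⟪x, x⟫ := by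
      rw [← h4.tsum_eq]
      refine tsum_nonneg fun i => ?_
      by_cases hik : (i : ℕ) ≤ k
      · rw [hx ↑i i.2 hik]; ring_nf; exact le_refl 0
      · have : lam (k+1) ≤ lam ↑i := h_mono (k+1) ↑i (by omega) (by omega)
        nlinarith [mul_self_nonneg (⟪x, u ↑i⟫ : ℝ)]
    have h6 : ⟪x, x⟫ = ‖x‖^2 := real_inner_self_eq_norm_sq x
    linarith [h6 ▸ h5]
  set I := Finset.Icc 1 k with hI
  have hmemI : ∀ j ∈ I, 1 ≤ j := fun j hj => (Finset.mem_Icc.mp hj).1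
  have hmemI' : ∀ j ∈ I, j ≤ k := fun j hj => (Finset.mem_Icc.mp hj).2
  -- the matrix of G
  set g : ℕ → ℕ → ℝ := fun i j => ⟪G (u i), u j⟫ with hg
  have hgsymm : ∀ i j : ℕ, g i j = g j i := by
    intro i j
    simp only [hg]
    rw [hGsym (u i) (u j), real_inner_comm]
  -- residual vectors
  set w : ℕ → 𝓗 := fun i => G (u i) - ∑ j ∈ I, g i j • u j with hw
  set v : ℕ → 𝓗 := fun i => A (w i) - lam i • w i with hv
  have hGu : ∀ i : ℕ, G (u i) = (∑ j ∈ I, g i j • u j) + w i := by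
    intro i; simp [hw]
  have hw_orth : ∀ i : ℕ, 1 ≤ i → ∀ j ∈ I, ⟪w i, u j⟫ = 0 := by
    intro i hi j hj
    simp only [hw, inner_sub_left, sum_inner, real_inner_smul_left]
    rw [Finset.sum_eq_single j]
    · rw [horth j j (hmemI j hj) (hmemI j hj)]; simp [hg]
    · intro j' hj' hne
      rw [horth j' j (hmemI j' hj') (hmemI j hj), if_neg hne, mul_zero]
    · intro h; exact absurd hj h
  have hv_orth : ∀ i : ℕ, 1 ≤ i → ∀ j ∈ I, ⟪v i, u j⟫ = 0 := by
    intro i hi j hj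
    simp only [hv, inner_sub_left, real_inner_smul_left]
    rw [hAsym (w i) (u j), h_eig j (hmemI j hj), real_inner_smul_right,
      hw_orth i hi j hj, mul_zero, mul_zero, sub_zero]
  -- decomposition of the commutator
  have hC : ∀ i : ℕ, 1 ≤ i →
      (A * G - G * A) (u i) = (∑ j ∈ I, ((lam j - lam i) * g i j) • u j) + v i := by
    intro i hi
    have h1 : (A * G - G * A) (u i) = A (G (u i)) - G (A (u i)) := rfl
    rw [h1, h_eig i hi, map_smul, hGu i, map_add, map_sum, smul_add, Finset.smul_sum]
    have h2 : ∀ j ∈ I, A (g i j • u j) = (g i j * lam j) • u j := by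
      intro j hj
      rw [map_smul, h_eig j (hmemI j hj), smul_smul]
    rw [Finset.sum_congr rfl h2]
    have h3 : ∀ j ∈ I, lam i • (g i j • u j) = (lam i * g i j) • u j := by
      intro j _; rw [smul_smul]
    rw [Finset.sum_congr rfl h3]
    have h4 : (∑ j ∈ I, (g i j * lam j) • u j) - (∑ j ∈ I, (lam i * g i j) • u j)
        = ∑ j ∈ I, ((lam j - lam i) * g i j) • u j := by
      rw [← Finset.sum_sub_distrib]
      refine Finset.sum_congr rfl fun j _ => ?_
      rw [← sub_smul]; ring_nf
    have hv' : v i = A (w i) - lam i • w i := rfl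
    rw [hv']
    rw [← h4]
    abel
  -- inner products of finite orthonormal combinations
  have hST : ∀ α β : ℕ → ℝ,
      ⟪∑ j ∈ I, α j • u j, ∑ j ∈ I, β j • u j⟫ = ∑ j ∈ I, α j * β j := by
    intro α β
    rw [sum_inner]
    refine Finset.sum_congr rfl fun j hj => ?_
    rw [real_inner_smul_left, inner_sum]
    simp only [real_inner_smul_right]
    rw [Finset.sum_eq_single j]
    · rw [horth j j (hmemI j hj) (hmemI j hj)]; simp
    · intro j' hj' hne
      rw [horth j j' (hmemI j hj) (hmemI j' hj'), if_neg (fun h => hne h.symm), mul_zero]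
    · intro h; exact absurd hj h
  have hSperp : ∀ (α : ℕ → ℝ) (x : 𝓗), (∀ j ∈ I, ⟪x, u j⟫ = 0) →
      ⟪∑ j ∈ I, α j • u j, x⟫ = 0 := by
    intro α x hx
    rw [sum_inner]
    refine Finset.sum_eq_zero fun j hj => ?_
    rw [real_inner_smul_left, real_inner_comm, hx j hj, mul_zero]
  -- the two expansions
  have hinner : ∀ i : ℕ, 1 ≤ i →
      ⟪(A * G - G * A) (u i), G (u i)⟫
        = (∑ j ∈ I, (lam j - lam i) * g i j ^ 2) + ⟪v i, w i⟫ := by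
    intro i hi
    rw [hC i hi, hGu i]
    simp only [inner_add_left, inner_add_right]
    rw [hST, hSperp _ (w i) (hw_orth i hi)]
    have h1 : ⟪v i, ∑ j ∈ I, g i j • u j⟫ = 0 := by
      rw [real_inner_comm]
      exact hSperp _ _ (hv_orth i hi)
    rw [h1]
    have h2 : ∑ j ∈ I, (lam j - lam i) * g i j * g i j
        = ∑ j ∈ I, (lam j - lam i) * g i j ^ 2 :=
      Finset.sum_congr rfl fun j _ => by ring
    rw [h2]; ring
  have hnorm : ∀ i : ℕ, 1 ≤ i →
      ‖(A * G - G * A) (u i)‖^2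
        = (∑ j ∈ I, (lam j - lam i)^2 * g i j ^ 2) + ‖v i‖^2 := by
    intro i hi
    rw [hC i hi, norm_add_sq_real]
    have h1 : ⟪∑ j ∈ I, ((lam j - lam i) * g i j) • u j, v i⟫ = 0 :=
      hSperp _ _ (hv_orth i hi)
    have h2 : ‖∑ j ∈ I, ((lam j - lam i) * g i j) • u j‖^2
        = ∑ j ∈ I, (lam j - lam i)^2 * g i j ^ 2 := by
      rw [← real_inner_self_eq_norm_sq, hST]
      exact Finset.sum_congr rfl fun j _ => by ring
    rw [h1, h2]; ring
  -- abbreviations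
  set d : ℕ → ℝ := fun i => lam (k+1) - lam i with hd
  set a : ℕ → ℝ := fun i => ∑ j ∈ I, (lam j - lam i) * g i j ^ 2 with ha
  set bb : ℕ → ℝ := fun i => ∑ j ∈ I, (lam j - lam i)^2 * g i j ^ 2 with hbb
  set F : ℕ → ℕ → ℝ := fun i j =>
    g i j ^ 2 * ((lam (k+1) - lam i) * ((lam j - lam i) * (lam j - lam (k+1)))) with hF
  -- the double sum vanishes by antisymmetry
  have hzero : ∑ i ∈ I, ∑ j ∈ I, F i j = 0 := by
    have hanti : ∀ i ∈ I, ∀ j ∈ I, F i j + F j i = 0 := by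
      intro i _ j _
      simp only [hF]
      rw [hgsymm j i]; ring
    have hcomm : ∑ i ∈ I, ∑ j ∈ I, F j i = ∑ i ∈ I, ∑ j ∈ I, F i j :=
      Finset.sum_comm
    have h2sum : (∑ i ∈ I, ∑ j ∈ I, F i j) + (∑ i ∈ I, ∑ j ∈ I, F j i) = 0 := by
      rw [← Finset.sum_add_distrib]
      refine Finset.sum_eq_zero fun i hi => ?_
      rw [← Finset.sum_add_distrib]
      exact Finset.sum_eq_zero fun j hj => hanti i hi j hj
    linarith
  -- hence the "diagonal" parts agree
  have hab : ∑ i ∈ I, d i ^ 2 * a i = ∑ i ∈ I, d i * bb i := by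
    have hdiff : ∑ i ∈ I, (d i * bb i - d i ^ 2 * a i) = ∑ i ∈ I, ∑ j ∈ I, F i j := by
      refine Finset.sum_congr rfl fun i _ => ?_
      simp only [ha, hbb, hd, hF, Finset.mul_sum]
      rw [← Finset.sum_sub_distrib]
      exact Finset.sum_congr rfl fun j _ => by ring
    rw [hzero] at hdiff
    rw [Finset.sum_sub_distrib] at hdiff
    linarith
  -- residual terms: termwise inequality
  have hres : ∀ i ∈ I, d i ^ 2 * ⟪v i, w i⟫ ≤ d i * ‖v i‖^2 := by
    intro i hi
    have hi1 : 1 ≤ i := hmemI i hi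
    have hdpos : 0 ≤ d i := by
      simp only [hd]
      linarith [h_mono i (k+1) hi1 (Nat.le_succ_of_le (hmemI' i hi))]
    have hworth : ∀ j : ℕ, 1 ≤ j → j ≤ k → ⟪w i, u j⟫ = 0 := by
      intro j hj1 hj2
      exact hw_orth i hi1 j (Finset.mem_Icc.mpr ⟨hj1, hj2⟩)
    have hrlow : d i * ‖w i‖^2 ≤ ⟪v i, w i⟫ := by
      have hs := hspec (w i) hworth
      have h1 : ⟪v i, w i⟫ = ⟪A (w i), w i⟫ - lam i * ‖w i‖^2 := by
        simp only [hv, inner_sub_left, real_inner_smul_left, real_inner_self_eq_norm_sq]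
      simp only [hd]
      linarith
    have hCS : ⟪v i, w i⟫ * ⟪v i, w i⟫ ≤ ‖v i‖^2 * ‖w i‖^2 := by
      have := real_inner_mul_inner_self_le (v i) (w i)
      rwa [real_inner_self_eq_norm_sq, real_inner_self_eq_norm_sq] at this
    have hr0 : 0 ≤ ⟪v i, w i⟫ :=
      le_trans (mul_nonneg hdpos (sq_nonneg _)) hrlow
    rcases eq_or_lt_of_le hr0 with h | h
    · rw [← h, mul_zero]
      positivity
    · have key : d i ^ 2 * ⟪v i, w i⟫ * ⟪v i, w i⟫ ≤ d i * ‖v i‖^2 * ⟪v i, w i⟫ := by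
        nlinarith [mul_nonneg hdpos (sq_nonneg (‖v i‖)), sq_nonneg (d i),
          mul_le_mul_of_nonneg_left hCS (sq_nonneg (d i)),
          mul_le_mul_of_nonneg_left hrlow (mul_nonneg hdpos (sq_nonneg (‖v i‖)))]
      exact le_of_mul_le_mul_right key h
  -- assemble
  have hLHS : ∑ i ∈ I, (lam (k+1) - lam i)^2 * ⟪(A * G - G * A) (u i), G (u i)⟫
      = ∑ i ∈ I, d i ^ 2 * a i + ∑ i ∈ I, d i ^ 2 * ⟪v i, w i⟫ := by
    rw [← Finset.sum_add_distrib]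
    refine Finset.sum_congr rfl fun i hi => ?_
    rw [hinner i (hmemI i hi)]
    simp only [hd, ha]; ring
  have hRHS : ∑ i ∈ I, (lam (k+1) - lam i) * ‖(A * G - G * A) (u i)‖^2
      = ∑ i ∈ I, d i * bb i + ∑ i ∈ I, d i * ‖v i‖^2 := by
    rw [← Finset.sum_add_distrib]
    refine Finset.sum_congr rfl fun i hi => ?_
    rw [hnorm i (hmemI i hi)]
    simp only [hd, hbb]; ring
  rw [hLHS, hRHS, ← hab]
  have : ∑ i ∈ I, d i ^ 2 * ⟪v i, w i⟫ ≤ ∑ i ∈ I, d i * ‖v i‖^2 :=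
    Finset.sum_le_sum hres
  linarith
end

section
/- Let n > 0 be a real number, k ≥ 1 an integer, λ_1, …, λ_{k+1} real numbers and δ_1, …, δ_k real numbers, and suppose that n ∑_{i=1}^k (λ_{k+1} − λ_i)² ≤ 4 ∑_{i=1}^k (λ_{k+1} − λ_i)(λ_i + δ_i). Define D_{nk} := ((1 + 2/n)(1/k)∑_{i=1}^k λ_i + (2/n)(1/k)∑_{i=1}^k δ_i)² − (1 + 4/n)(1/k)∑_{i=1}^k λ_i² − (4/n)(1/k)∑_{i=1}^k λ_i δ_i. Then D_{nk} ≥ 0 and (1 + 2/n)(1/k)∑_{i=1}^k λ_i + (2/n)(1/k)∑_{i=1}^k δ_i − √D_{nk} ≤ λ_{k+1} ≤ (1 + 2/n)(1/k)∑_{i=1}^k λ_i + (2/n)(1/k)∑_{i=1}^k δ_i + √D_{nk}. -/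
/-- Parts (II) and (III) of Theorem 2.1: if the Yang-type inequality (I) holds, then the
discriminant-type quantity `D_{nk}` is nonnegative and `lam (k+1)` lies between the two
roots of the associated quadratic polynomial. -/
theorem two_sided_bound_from_yang (n : ℝ) (hn : 0 < n) (k : ℕ) (hk : 1 ≤ k)
    (lam : ℕ → ℝ) (δ : ℕ → ℝ)
    (h : n * ∑ i ∈ Finset.Icc 1 k, (lam (k+1) - lam i)^2
        ≤ 4 * ∑ i ∈ Finset.Icc 1 k, (lam (k+1) - lam i) * (lam i + δ i)) :
    0 ≤ ((1 + 2/n) * ((1:ℝ)/k) * ∑ i ∈ Finset.Icc 1 k, lam i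
          + (2/n) * ((1:ℝ)/k) * ∑ i ∈ Finset.Icc 1 k, δ i)^2
        - (1 + 4/n) * ((1:ℝ)/k) * ∑ i ∈ Finset.Icc 1 k, (lam i)^2
        - (4/n) * ((1:ℝ)/k) * ∑ i ∈ Finset.Icc 1 k, lam i * δ i
    ∧ (1 + 2/n) * ((1:ℝ)/k) * ∑ i ∈ Finset.Icc 1 k, lam i
        + (2/n) * ((1:ℝ)/k) * ∑ i ∈ Finset.Icc 1 k, δ i
        - Real.sqrt (((1 + 2/n) * ((1:ℝ)/k) * ∑ i ∈ Finset.Icc 1 k, lam i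
            + (2/n) * ((1:ℝ)/k) * ∑ i ∈ Finset.Icc 1 k, δ i)^2
          - (1 + 4/n) * ((1:ℝ)/k) * ∑ i ∈ Finset.Icc 1 k, (lam i)^2
          - (4/n) * ((1:ℝ)/k) * ∑ i ∈ Finset.Icc 1 k, lam i * δ i)
      ≤ lam (k+1)
    ∧ lam (k+1)
      ≤ (1 + 2/n) * ((1:ℝ)/k) * ∑ i ∈ Finset.Icc 1 k, lam i
        + (2/n) * ((1:ℝ)/k) * ∑ i ∈ Finset.Icc 1 k, δ i
        + Real.sqrt (((1 + 2/n) * ((1:ℝ)/k) * ∑ i ∈ Finset.Icc 1 k, lam i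
            + (2/n) * ((1:ℝ)/k) * ∑ i ∈ Finset.Icc 1 k, δ i)^2
          - (1 + 4/n) * ((1:ℝ)/k) * ∑ i ∈ Finset.Icc 1 k, (lam i)^2
          - (4/n) * ((1:ℝ)/k) * ∑ i ∈ Finset.Icc 1 k, lam i * δ i) := by
  set x := lam (k+1) with hx
  set S1 := ∑ i ∈ Finset.Icc 1 k, lam i with hS1
  set S2 := ∑ i ∈ Finset.Icc 1 k, δ i with hS2
  set S3 := ∑ i ∈ Finset.Icc 1 k, (lam i)^2 with hS3
  set S4 := ∑ i ∈ Finset.Icc 1 k, lam i * δ i with hS4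
  have hcard : ((Finset.Icc 1 k).card : ℝ) = (k : ℝ) := by
    simp [Nat.card_Icc]
  have hkpos : (0:ℝ) < (k:ℝ) := by exact_mod_cast Nat.lt_of_lt_of_le Nat.zero_lt_one hk
  set b := (1 + 2/n) * ((1:ℝ)/k) * S1 + (2/n) * ((1:ℝ)/k) * S2 with hb
  set c := (1 + 4/n) * ((1:ℝ)/k) * S3 + (4/n) * ((1:ℝ)/k) * S4 with hc
  -- Expand the sums in h
  have e1 : ∑ i ∈ Finset.Icc 1 k, (x - lam i)^2 = (k:ℝ) * x^2 - 2*x*S1 + S3 := by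
    have := Finset.sum_congr rfl (fun i (_ : i ∈ Finset.Icc 1 k) =>
      (by ring : (x - lam i)^2 = x^2 - 2*x*lam i + (lam i)^2))
    rw [this]
    rw [Finset.sum_add_distrib, Finset.sum_sub_distrib, Finset.sum_const, ← Finset.mul_sum]
    try rw [nsmul_eq_mul, hcard]
    try ring
  have e2 : ∑ i ∈ Finset.Icc 1 k, (x - lam i) * (lam i + δ i)
      = x*S1 + x*S2 - S3 - S4 := by
    have := Finset.sum_congr rfl (fun i (_ : i ∈ Finset.Icc 1 k) =>
      (by ring : (x - lam i) * (lam i + δ i)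
        = x*lam i + x*δ i - (lam i)^2 - lam i * δ i))
    rw [this]
    simp only [Finset.sum_add_distrib, Finset.sum_sub_distrib, ← Finset.mul_sum]
    try ring
  rw [e1, e2] at h
  have hnk : 0 < n * (k:ℝ) := mul_pos hn hkpos
  have key : (x - b)^2 ≤ b^2 - c := by
    have h2 : n * (k:ℝ) * (x^2 - 2*b*x + c) ≤ 0 := by
      have hb' : b = (1 + 2/n) * ((1:ℝ)/k) * S1 + (2/n) * ((1:ℝ)/k) * S2 := hb
      have hc' : c = (1 + 4/n) * ((1:ℝ)/k) * S3 + (4/n) * ((1:ℝ)/k) * S4 := hc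
      rw [hb', hc']
      have hn' : n ≠ 0 := ne_of_gt hn
      have hk' : (k:ℝ) ≠ 0 := ne_of_gt hkpos
      field_simp
      nlinarith [h]
    have h3 : x^2 - 2*b*x + c ≤ 0 := by
      by_contra hcon
      push_neg at hcon
      nlinarith
    nlinarith
  have hD : 0 ≤ b^2 - c := le_trans (sq_nonneg _) key
  have habs : |x - b| ≤ Real.sqrt (b^2 - c) := by
    rw [← Real.sqrt_sq_eq_abs]
    exact Real.sqrt_le_sqrt key
  rw [abs_le] at habs
  have hgoalD : ((1 + 2/n) * ((1:ℝ)/k) * S1 + (2/n) * ((1:ℝ)/k) * S2)^2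
      - (1 + 4/n) * ((1:ℝ)/k) * S3 - (4/n) * ((1:ℝ)/k) * S4 = b^2 - c := by
    rw [hb, hc]; ring
  rw [hgoalD]
  refine ⟨hD, ?_, ?_⟩ <;> [skip; skip]
  · have := habs.1; rw [hb] at *; linarith [habs.1]
  · have := habs.2; rw [hb] at *; linarith [habs.2]
end

section
/- Let n ≥ 1 and m ≥ 0 be integers. For ℓ ≥ 0 define the multiplicity μ_{n,ℓ} of the ℓ-th eigenvalue of the Laplacian on the standard sphere 𝕊^n by μ_{n,0} = 1 and μ_{n,ℓ} = C(n+ℓ, n) − C(n+ℓ−2, n) for ℓ ≥ 1 (binomial coefficients, with C(a,b) = 0 when a < b), and set e_ℓ = ℓ(ℓ + n − 1) and Λ = (m+1)(m+n). Then n ∑_{ℓ=0}^m μ_{n,ℓ} (Λ − e_ℓ)² = ∑_{ℓ=0}^m μ_{n,ℓ} (Λ − e_ℓ)(4 e_ℓ + n²). -/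
/-- Multiplicity of the `ℓ`-th eigenvalue of the Laplacian on the standard sphere `𝕊ⁿ`:
`μ_{n,0} = 1` and `μ_{n,ℓ} = C(n+ℓ, n) − C(n+ℓ−2, n)` for `ℓ ≥ 1`. -/
noncomputable def sphereMultiplicity (n ℓ : ℕ) : ℝ :=
  if ℓ = 0 then 1 else (Nat.choose (n + ℓ) n : ℝ) - (Nat.choose (n + ℓ - 2) n : ℝ)

lemma choose_ratio (n k : ℕ) (hn : 1 ≤ n) :
    (k+1) * Nat.choose (n+k) (n-1) = (n+k) * Nat.choose (n+k-1) (n-1) := by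
  have h1 := Nat.add_one_mul_choose_eq (n+k-1) k
  have e1 : n+k-1+1 = n+k := by omega
  have e2 : Nat.choose (n+k-1) k = Nat.choose (n+k-1) (n-1) := by
    rw [← Nat.choose_symm (show n-1 ≤ n+k-1 by omega)]
    congr 1; omega
  have e3 : Nat.choose (n+k) (k+1) = Nat.choose (n+k) (n-1) := by
    rw [← Nat.choose_symm (show n-1 ≤ n+k by omega)]
    congr 1; omega
  rw [e1, e2, e3] at h1
  rw [mul_comm]
  exact h1.symm

lemma pascal1 (n k : ℕ) (hn : 1 ≤ n) :
    Nat.choose (n+k+1) n = Nat.choose (n+k) (n-1) + Nat.choose (n+k) n := by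
  have h := Nat.choose_succ_succ (n+k) (n-1)
  simp only [Nat.succ_eq_add_one] at h
  have e : n-1+1 = n := by omega
  rw [e] at h
  exact h

lemma pascal2 (n k : ℕ) (hn : 1 ≤ n) :
    Nat.choose (n+k) n = Nat.choose (n+k-1) (n-1) + Nat.choose (n+k-1) n := by
  have h := Nat.choose_succ_succ (n+k-1) (n-1)
  simp only [Nat.succ_eq_add_one] at h
  have e : n-1+1 = n := by omega
  have e' : n+k-1+1 = n+k := by omega
  rw [e, e'] at h
  exact h

lemma sphere_partial (n m : ℕ) (hn : 1 ≤ n) : ∀ k : ℕ,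
    ∑ ℓ ∈ Finset.range (k+1), (sphereMultiplicity n ℓ *
        ((n : ℝ) * (((m : ℝ) + 1) * ((m : ℝ) + n) - (ℓ : ℝ) * ((ℓ : ℝ) + n - 1))^2
         - (((m : ℝ) + 1) * ((m : ℝ) + n) - (ℓ : ℝ) * ((ℓ : ℝ) + n - 1)) *
           (4 * ((ℓ : ℝ) * ((ℓ : ℝ) + n - 1)) + (n : ℝ)^2)))
      = (Nat.choose (n+k-1) (n-1) : ℝ) * ((m:ℝ)-(k:ℝ)) * (((m:ℝ)-(k:ℝ))+1) *
        ((n:ℝ)+2*(k:ℝ)) * ((n:ℝ)+(m:ℝ)+(k:ℝ)) * ((n:ℝ)+(m:ℝ)+(k:ℝ)+1) := by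
  intro k
  induction k with
  | zero =>
    rw [Finset.sum_range_one]
    have h0 : n + 0 - 1 = n - 1 := by omega
    rw [h0, Nat.choose_self]
    simp only [sphereMultiplicity, if_pos rfl]
    push_cast
    ring
  | succ k ih =>
    rw [Finset.sum_range_succ, ih]
    have hμ : sphereMultiplicity n (k+1)
        = (Nat.choose (n+k+1) n : ℝ) - (Nat.choose (n+k-1) n : ℝ) := by
      unfold sphereMultiplicity
      rw [if_neg (Nat.succ_ne_zero k)]
      have e1 : n + (k+1) = n+k+1 := by omega
      have e2 : n + (k+1) - 2 = n+k-1 := by omega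
      rw [e2, e1]
    rw [hμ, pascal1 n k hn, pascal2 n k hn]
    have hidx : n + (k+1) - 1 = n + k := by omega
    rw [hidx]
    have hC : ((k:ℝ)+1) * (Nat.choose (n+k) (n-1) : ℝ)
        = ((n:ℝ)+(k:ℝ)) * (Nat.choose (n+k-1) (n-1) : ℝ) := by
      exact_mod_cast congrArg (fun x : ℕ => (x : ℝ)) (choose_ratio n k hn)
    have hk : ((k:ℝ)+1) ≠ 0 := by positivity
    apply mul_left_cancel₀ hk
    push_cast
    linear_combination
      (((((m:ℝ)+1)*((m:ℝ)+n) - ((k:ℝ)+1)*(((k:ℝ)+1)+n-1)) *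
        ((n:ℝ)*(((m:ℝ)+1)*((m:ℝ)+n)) - ((n:ℝ)+4)*(((k:ℝ)+1)*(((k:ℝ)+1)+n-1)) - (n:ℝ)^2))
       - (((m:ℝ)-((k:ℝ)+1)) * (((m:ℝ)-((k:ℝ)+1))+1) * ((n:ℝ)+2*((k:ℝ)+1)) *
          ((n:ℝ)+(m:ℝ)+((k:ℝ)+1)) * ((n:ℝ)+(m:ℝ)+((k:ℝ)+1)+1))) * hC

/-- The exact identity at the heart of Corollary 2.4: the universal inequality (I) of
Theorem 2.1 is saturated for the standard sphere `𝕊ⁿ` at every eigenvalue gap.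
Here `e ℓ = ℓ(ℓ+n−1)` and `Λ = (m+1)(m+n)`. -/
theorem sphere_saturation (n m : ℕ) (hn : 1 ≤ n) :
    (n : ℝ) * ∑ ℓ ∈ Finset.range (m+1), sphereMultiplicity n ℓ *
        (((m : ℝ) + 1) * ((m : ℝ) + n) - (ℓ : ℝ) * ((ℓ : ℝ) + n - 1))^2
      = ∑ ℓ ∈ Finset.range (m+1), sphereMultiplicity n ℓ *
        (((m : ℝ) + 1) * ((m : ℝ) + n) - (ℓ : ℝ) * ((ℓ : ℝ) + n - 1)) *
        (4 * ((ℓ : ℝ) * ((ℓ : ℝ) + n - 1)) + (n : ℝ)^2) := by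
  have h := sphere_partial n m hn m
  have h0 : ∑ ℓ ∈ Finset.range (m+1), (sphereMultiplicity n ℓ *
        ((n : ℝ) * (((m : ℝ) + 1) * ((m : ℝ) + n) - (ℓ : ℝ) * ((ℓ : ℝ) + n - 1))^2
         - (((m : ℝ) + 1) * ((m : ℝ) + n) - (ℓ : ℝ) * ((ℓ : ℝ) + n - 1)) *
           (4 * ((ℓ : ℝ) * ((ℓ : ℝ) + n - 1)) + (n : ℝ)^2))) = 0 := by
    rw [h]; ring
  have hs : (n : ℝ) * (∑ ℓ ∈ Finset.range (m+1), sphereMultiplicity n ℓ *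
        (((m : ℝ) + 1) * ((m : ℝ) + n) - (ℓ : ℝ) * ((ℓ : ℝ) + n - 1))^2)
      - ∑ ℓ ∈ Finset.range (m+1), sphereMultiplicity n ℓ *
        (((m : ℝ) + 1) * ((m : ℝ) + n) - (ℓ : ℝ) * ((ℓ : ℝ) + n - 1)) *
        (4 * ((ℓ : ℝ) * ((ℓ : ℝ) + n - 1)) + (n : ℝ)^2)
      = ∑ ℓ ∈ Finset.range (m+1), (sphereMultiplicity n ℓ *
        ((n : ℝ) * (((m : ℝ) + 1) * ((m : ℝ) + n) - (ℓ : ℝ) * ((ℓ : ℝ) + n - 1))^2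
         - (((m : ℝ) + 1) * ((m : ℝ) + n) - (ℓ : ℝ) * ((ℓ : ℝ) + n - 1)) *
           (4 * ((ℓ : ℝ) * ((ℓ : ℝ) + n - 1)) + (n : ℝ)^2))) := by
    rw [Finset.mul_sum, ← Finset.sum_sub_distrib]
    exact Finset.sum_congr rfl fun ℓ _ => by ring
  linarith [hs, h0]
end

section
/- Let n ≥ 1 be an integer, k ≥ 1 an integer, and λ_1, …, λ_{k+1} nonnegative real numbers satisfying n ∑_{i=1}^k (λ_{k+1} − λ_i)² ≤ 2 ∑_{i=1}^k (λ_{k+1} − λ_i) λ_i. Then λ_{k+1} ≤ ((n+2)/(nk)) ∑_{i=1}^k λ_i. -/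
/-- Algebraic content of Remark 5.1: the Yang-type inequality (I) of Theorem 5.1 for
nonnegative eigenvalues yields `lam (k+1) ≤ ((n+2)/(nk)) ∑_{i=1}^k lam i`, improving a
result of Niu and Zhang. -/
theorem kohn_upper_bound (n : ℕ) (hn : 1 ≤ n) (k : ℕ) (hk : 1 ≤ k)
    (lam : ℕ → ℝ) (hnonneg : ∀ i : ℕ, 1 ≤ i → i ≤ k + 1 → 0 ≤ lam i)
    (h : (n : ℝ) * ∑ i ∈ Finset.Icc 1 k, (lam (k+1) - lam i)^2
        ≤ 2 * ∑ i ∈ Finset.Icc 1 k, (lam (k+1) - lam i) * lam i) :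
    lam (k+1) ≤ ((n : ℝ) + 2)/((n : ℝ) * k) * ∑ i ∈ Finset.Icc 1 k, lam i := by
  set Λ : ℝ := lam (k+1) with hΛ
  set S : ℝ := ∑ i ∈ Finset.Icc 1 k, lam i with hS
  set Q : ℝ := ∑ i ∈ Finset.Icc 1 k, (lam i)^2 with hQ
  have hcard : ((Finset.Icc 1 k).card : ℝ) = k := by simp
  have hSnn : 0 ≤ S := Finset.sum_nonneg fun i hi => by
    rw [Finset.mem_Icc] at hi; exact hnonneg i hi.1 (hi.2.trans (Nat.le_succ k))
  have e1 : ∑ i ∈ Finset.Icc 1 k, (Λ - lam i)^2 = k*Λ^2 - 2*Λ*S + Q := by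
    have : ∀ i ∈ Finset.Icc 1 k, (Λ - lam i)^2 = Λ^2 - 2*Λ*lam i + (lam i)^2 :=
      fun i _ => by ring
    rw [Finset.sum_congr rfl this]
    simp [Finset.sum_add_distrib, Finset.sum_sub_distrib, ← Finset.mul_sum,
      Finset.sum_const, hcard]
    try ring
  have e2 : ∑ i ∈ Finset.Icc 1 k, (Λ - lam i) * lam i = Λ*S - Q := by
    have : ∀ i ∈ Finset.Icc 1 k, (Λ - lam i) * lam i = Λ*lam i - (lam i)^2 :=
      fun i _ => by ring
    rw [Finset.sum_congr rfl this]
    simp [Finset.sum_sub_distrib, ← Finset.mul_sum]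
    rfl
  rw [e1, e2] at h
  have hcs : S^2 ≤ (k : ℝ) * Q := by
    have := sq_sum_le_card_mul_sum_sq (s := Finset.Icc 1 k) (f := lam)
    simpa [hcard, hS, hQ] using this
  have hn1 : (1:ℝ) ≤ n := by exact_mod_cast hn
  have hk1 : (1:ℝ) ≤ k := by exact_mod_cast hk
  have key : ((n:ℝ)*k*Λ - ((n:ℝ)+2)*S) * ((k:ℝ)*Λ - S) ≤ 0 := by nlinarith
  have hnk : (0:ℝ) < (n:ℝ) * k := by positivity
  rw [div_mul_eq_mul_div, le_div_iff₀ hnk]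
  rcases mul_nonpos_iff.mp key with ⟨h1, h2⟩ | ⟨h1, h2⟩
  · nlinarith
  · nlinarith
end
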